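/- The diagram of measure maps commutes: for every probability measure μ on {0,1}^ℤ, the pushforward under φ of μF_A equals (φ_*μ)F_B, i.e. φ_*(μ F_A) = (φ_*μ) F_B. (Lemma 4.1, measure version.) -/

import Mathlib

open MeasureTheory ProbabilityTheory

/-!
Conventions: a configuration of model A is `x : ℤ → Bool` (`false` = 0, `true` = 1);
a configuration of model B is `y : ℤ → Bool` (`false` = ∘, `true` = •);
an update configuration is `u : ℤ → Bool` (`true` = ↑, `false` = →).
The spaces `ℤ → Bool` carry the product σ-algebra.
-/

/-- The local map `𝒜` of model A. -/
def modelA (x u : ℤ → Bool) : ℤ → Bool := fun i =>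
  if x (i - 1) = x i then xor (x i) (u i) else x (i - 1)

/-- The local map `ℬ` of model B: the `i`-th coordinate of `ℬ(y,u)` is `•` iff
`(y_{i-1}y_i, u_{i-1}u_i) ∈ {(•∘, →⋅), (∘•, ⋅↑), (••, ↑↑), (••, →→)}`. -/
def modelB (y u : ℤ → Bool) : ℤ → Bool := fun i =>
  match y (i - 1), y i with
  | true, false => !u (i - 1)
  | false, true => u i
  | true, true => u (i - 1) == u i
  | false, false => false

/-- The map `φ`: the `i`-th coordinate of `φ(x)` is `•` iff `x_i x_{i+1} ∈ {00,11}`. -/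
def phi (x : ℤ → Bool) : ℤ → Bool := fun i => x i == x (i + 1)

/-- `lam` is the product over `ℤ` of the uniform measure on the two-element update
alphabet `𝒰`: it is a probability measure giving each cylinder prescribing the values
on a finite set `s` of coordinates the measure `(1/2)^|s|`. -/
def IsUniformProduct (lam : Measure (ℤ → Bool)) : Prop :=
  IsProbabilityMeasure lam ∧
    ∀ (s : Finset ℤ) (f : ℤ → Bool),
      lam {u | ∀ i ∈ s, u i = f i} = (1 / 2 : ENNReal) ^ s.card

/-- `μ F_A`: the pushforward of `μ ⊗ lam` under `𝒜`. -/
noncomputable def FA (lam μ : Measure (ℤ → Bool)) : Measure (ℤ → Bool) :=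
  Measure.map (fun p : (ℤ → Bool) × (ℤ → Bool) => modelA p.1 p.2) (μ.prod lam)

/-- `ν F_B`: the pushforward of `ν ⊗ lam` under `ℬ`. -/
noncomputable def FB (lam ν : Measure (ℤ → Bool)) : Measure (ℤ → Bool) :=
  Measure.map (fun p : (ℤ → Bool) × (ℤ → Bool) => modelB p.1 p.2) (ν.prod lam)


/-! ### Auxiliary material for the proof -/

section Aux
open MeasureTheory

/-- The left shift on update configurations. -/
def updShift (u : ℤ → Bool) : ℤ → Bool := fun j => u (j + 1)

lemma key_pointwise (x u : ℤ → Bool) : phi (modelA x u) = modelB (phi x) (updShift u) := by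
  funext i
  simp only [phi, modelA, modelB, updShift]
  have h1 : i - 1 + 1 = i := by ring
  have h2 : i + 1 - 1 = i := by ring
  rw [h1, h2]
  rcases hx1 : x (i-1) <;> rcases hx2 : x i <;> rcases hx3 : x (i+1) <;>
    rcases hu1 : u i <;> rcases hu2 : u (i+1) <;> simp

lemma meas_modelA : Measurable (fun p : (ℤ → Bool) × (ℤ → Bool) => modelA p.1 p.2) := by
  unfold modelA
  apply measurable_pi_iff.2
  intro i
  have : (fun p : (ℤ → Bool) × (ℤ → Bool) =>
      if p.1 (i - 1) = p.1 i then xor (p.1 i) (p.2 i) else p.1 (i - 1)) =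
      (fun t : Bool × Bool × Bool => if t.1 = t.2.1 then xor t.2.1 t.2.2 else t.1) ∘
      (fun p => (p.1 (i-1), p.1 i, p.2 i)) := rfl
  rw [this]
  exact (measurable_of_countable _).comp (by fun_prop)

lemma meas_modelB : Measurable (fun p : (ℤ → Bool) × (ℤ → Bool) => modelB p.1 p.2) := by
  unfold modelB
  apply measurable_pi_iff.2
  intro i
  have : (fun p : (ℤ → Bool) × (ℤ → Bool) =>
      (match p.1 (i - 1), p.1 i with
      | true, false => !p.2 (i - 1)
      | false, true => p.2 i
      | true, true => p.2 (i - 1) == p.2 i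
      | false, false => false : Bool)) =
      (fun t : Bool × Bool × Bool × Bool =>
        (match t.1, t.2.1 with
        | true, false => !t.2.2.1
        | false, true => t.2.2.2
        | true, true => t.2.2.1 == t.2.2.2
        | false, false => false : Bool)) ∘
      (fun p => (p.1 (i-1), p.1 i, p.2 (i-1), p.2 i)) := rfl
  rw [this]
  exact (measurable_of_countable _).comp (by fun_prop)

lemma meas_phi : Measurable phi := by
  unfold phi
  apply measurable_pi_iff.2
  intro i
  have : (fun x : ℤ → Bool => x i == x (i+1)) =
      (fun t : Bool × Bool => t.1 == t.2) ∘ (fun x => (x i, x (i+1))) := rfl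
  rw [this]
  exact (measurable_of_countable _).comp (by fun_prop)

lemma meas_updShift : Measurable updShift := by
  unfold updShift
  exact measurable_pi_iff.2 fun j => measurable_pi_apply _

def cylSets : Set (Set (ℤ → Bool)) :=
  {S | ∃ (s : Finset ℤ) (f : ℤ → Bool), S = {u | ∀ i ∈ s, u i = f i}}

lemma cyl_measurable (s : Finset ℤ) (f : ℤ → Bool) :
    MeasurableSet {u : ℤ → Bool | ∀ i ∈ s, u i = f i} := by
  have : {u : ℤ → Bool | ∀ i ∈ s, u i = f i} = ⋂ i ∈ s, {u | u i = f i} := by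
    ext u; simp
  rw [this]
  refine MeasurableSet.biInter s.countable_toSet fun i _ => ?_
  have : {u : ℤ → Bool | u i = f i} = (fun u : ℤ → Bool => u i) ⁻¹' {f i} := rfl
  rw [this]
  exact (measurable_pi_apply i) (measurableSet_singleton (f i))

lemma isPiSystem_cylSets : IsPiSystem cylSets := by
  rintro S ⟨s, f, rfl⟩ T ⟨t, g, rfl⟩ ⟨u0, hu0s, hu0t⟩
  refine ⟨s ∪ t, fun i => if i ∈ s then f i else g i, ?_⟩
  ext u
  simp only [Set.mem_inter_iff, Set.mem_setOf_eq, Finset.mem_union]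
  constructor
  · rintro ⟨h1, h2⟩ i hi
    by_cases his : i ∈ s
    · simp [his, h1 i his]
    · simp [his, h2 i (hi.resolve_left his)]
  · intro h
    constructor
    · intro i hi
      have := h i (Or.inl hi); simpa [hi] using this
    · intro i hi
      have := h i (Or.inr hi)
      by_cases his : i ∈ s
      · simp only [his, if_pos] at this
        rw [this, ← hu0s i his, hu0t i hi]
      · simpa [his] using this

lemma generateFrom_cylSets :
    MeasurableSpace.pi (X := fun _ : ℤ => Bool) = MeasurableSpace.generateFrom cylSets := by
  apply le_antisymm
  · rw [MeasurableSpace.pi]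
    apply iSup_le
    intro i
    rintro S ⟨T, -, rfl⟩
    have : (fun u : ℤ → Bool => u i) ⁻¹' T = ⋃ b ∈ T, {u : ℤ → Bool | u i = b} := by
      ext u; simp [eq_comm]
    rw [this]
    exact MeasurableSet.biUnion T.to_countable fun b _ =>
      MeasurableSpace.measurableSet_generateFrom
        ⟨{i}, fun _ => b, by ext u; simp⟩
  · apply MeasurableSpace.generateFrom_le
    rintro S ⟨s, f, rfl⟩
    exact cyl_measurable s f

lemma ext_of_cyl (μ ν : Measure (ℤ → Bool)) [IsProbabilityMeasure μ] [IsProbabilityMeasure ν]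
    (h : ∀ (s : Finset ℤ) (f : ℤ → Bool),
      μ {u | ∀ i ∈ s, u i = f i} = ν {u | ∀ i ∈ s, u i = f i}) : μ = ν := by
  refine ext_of_generate_finite cylSets generateFrom_cylSets isPiSystem_cylSets ?_ ?_
  · rintro S ⟨s, f, rfl⟩
    exact h s f
  · simp

lemma shift_invariant (lam : Measure (ℤ → Bool)) (hlam : IsUniformProduct lam) :
    Measure.map updShift lam = lam := by
  obtain ⟨hprob, hcyl⟩ := hlam
  haveI := hprob
  haveI : IsProbabilityMeasure (Measure.map updShift lam) :=
    Measure.isProbabilityMeasure_map meas_updShift.aemeasurable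
  refine ext_of_cyl _ _ fun s f => ?_
  rw [Measure.map_apply meas_updShift (cyl_measurable s f)]
  have hpre : updShift ⁻¹' {u | ∀ i ∈ s, u i = f i}
      = {u | ∀ j ∈ s.image (· + 1), u j = f (j - 1)} := by
    ext u
    simp only [Set.mem_preimage, Set.mem_setOf_eq, updShift, Finset.mem_image]
    constructor
    · rintro h j ⟨i, hi, rfl⟩
      simpa using h i hi
    · intro h i hi
      have := h (i + 1) ⟨i, hi, rfl⟩
      simpa using this
  rw [hpre, hcyl, hcyl]
  congr 1
  rw [Finset.card_image_of_injective _ (add_left_injective 1)]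

end Aux

/-- Lemma 4.1, measure version: `φ_*(μ F_A) = (φ_*μ) F_B` for every
probability measure `μ` on `{0,1}^ℤ`. -/
theorem map_phi_FA_eq_FB_map_phi (lam : Measure (ℤ → Bool))
    (hlam : IsUniformProduct lam) (μ : Measure (ℤ → Bool)) [IsProbabilityMeasure μ] :
    Measure.map phi (FA lam μ) = FB lam (Measure.map phi μ) := by
  haveI := hlam.1
  unfold FA FB
  rw [Measure.map_map meas_phi meas_modelA]
  have hcomp : phi ∘ (fun p : (ℤ → Bool) × (ℤ → Bool) => modelA p.1 p.2)
      = (fun p : (ℤ → Bool) × (ℤ → Bool) => modelB p.1 p.2) ∘ (Prod.map phi updShift) := by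
    funext p
    exact key_pointwise p.1 p.2
  rw [hcomp, ← Measure.map_map meas_modelB (meas_phi.prodMap meas_updShift),
    ← Measure.map_prod_map _ _ meas_phi meas_updShift, shift_invariant lam hlam]
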